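/- Let (σ, A, a) be a substitution satisfying condition (C) that projects onto a primitive substitution (τ, B, b), and let σ' be a principal sub-substitution of σ. Then σ' and τ have the same dominant eigenvalue. -/

import Mathlib

/-- Apply a substitution (given on letters) to a word. -/
def Subst.apply {A : Type*} (σ : A → List A) (w : List A) : List A := (w.map σ).flatten

/-- A substitution is primitive if some iterate maps every letter to a word containing
every letter. -/
def Primitive {A : Type*} (σ : A → List A) : Prop :=
  ∃ n : ℕ, 0 < n ∧ ∀ c d : A, d ∈ (Subst.apply σ)^[n] [c]

/-- Incidence matrix of a substitution. -/
noncomputable def IncMat {A : Type*} [Fintype A] [DecidableEq A] (σ : A → List A) :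
    Matrix A A ℝ := Matrix.of fun i j => ((σ j).count i : ℝ)

/-- Incidence matrix of the sub-substitution associated with the component `i` of the
partition `P`: apply `σ`, erase the letters outside the component, and count occurrences. -/
noncomputable def SubIncMat {A : Type*} [Fintype A] [DecidableEq A] {l : ℕ}
    (σ : A → List A) (P : A → Fin l) (i : Fin l) :
    Matrix {x // P x = i} {x // P x = i} ℝ :=
  Matrix.of fun r c => ((((σ c.1).filter (fun x => P x == i)).count r.1 : ℕ) : ℝ)

/-- `α` is the dominant (Perron) eigenvalue of the real matrix `M`. -/
def IsDomEig {n : Type*} [Fintype n] [DecidableEq n] (M : Matrix n n ℝ) (α : ℝ) : Prop :=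
  Module.End.HasEigenvalue (Matrix.toLin' M) α ∧
  ∀ μ : ℂ, Module.End.HasEigenvalue (Matrix.toLin' (M.map Complex.ofReal)) μ →
    ‖μ‖ ≤ α

/-- Condition (C) for a substitution `σ`, with respect to the partition of the alphabet given
by `P : A → Fin l` into primitive components (the principal ones being those of index `≥ q`),
with distinguished starting letters `st i` for each component. -/
def ConditionC {A : Type*} (σ : A → List A) {l : ℕ} (q : ℕ) (P : A → Fin l)
    (st : Fin l → A) : Prop :=
  q + 1 ≤ l ∧ Function.Surjective P ∧ (∀ c : A, σ c ≠ []) ∧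
  (∀ c d : A, d ∈ σ c → P c ≤ P d) ∧
  (∀ i : Fin l, (i : ℕ) < q →
    (∀ c d : A, P c = i → P d = i → d ∉ σ c) ∨ (∀ c d : A, P c = i → P d = i → d ∈ σ c)) ∧
  (∀ i : Fin l, q ≤ (i : ℕ) → ∀ c d : A, P c = i → P d = i → d ∈ σ c) ∧
  (∀ c d : A, q ≤ ((P c) : ℕ) → q ≤ ((P d) : ℕ) → P c ≠ P d → d ∉ σ c) ∧
  (∀ i : Fin l, (i : ℕ) < q → ∃ c d : A, P c = i ∧ i < P d ∧ d ∈ σ c) ∧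
  (∀ i : Fin l, P (st i) = i) ∧
  (∀ i : Fin l, (i : ℕ) < q → (∃ c d : A, P c = i ∧ P d = i ∧ d ∈ σ c) →
    ((σ (st i)).filter (fun x => P x == i)).head? = some (st i)) ∧
  (∀ i : Fin l, q ≤ (i : ℕ) → ∃ u : List A, u ≠ [] ∧ σ (st i) = st i :: u)

open scoped ENNReal NNReal Matrix

/-! ### Auxiliary lemmas -/

attribute [local instance] Matrix.linftyOpNormedAddCommGroup Matrix.linftyOpNormedSpace
  Matrix.linftyOpNormedRing Matrix.linftyOpNormedAlgebra

lemma aux_hasEigenvalue_map_ofReal {n : Type*} [Fintype n] [DecidableEq n]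
    (X : Matrix n n ℝ) (γ : ℝ)
    (h : Module.End.HasEigenvalue (Matrix.toLin' X) γ) :
    Module.End.HasEigenvalue (Matrix.toLin' (X.map Complex.ofReal)) (γ : ℂ) := by
  obtain ⟨v, hv⟩ := h.exists_hasEigenvector
  have hv1 : X.mulVec v = γ • v := by
    have := hv.apply_eq_smul; rwa [Matrix.toLin'_apply] at this
  refine Module.End.hasEigenvalue_of_hasEigenvector (x := fun j => (v j : ℂ)) ⟨?_, ?_⟩
  · rw [Module.End.mem_eigenspace_iff, Matrix.toLin'_apply]
    funext r
    have h1 : (X.mulVec v) r = γ * v r := by rw [hv1]; simp [Pi.smul_apply, smul_eq_mul]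
    simp only [Matrix.mulVec, dotProduct, Matrix.map_apply, Pi.smul_apply, smul_eq_mul]
    have h2 : (∑ j, (X r j : ℂ) * (v j : ℂ)) = ((∑ j, X r j * v j : ℝ) : ℂ) := by push_cast; rfl
    rw [h2]
    norm_cast
  · intro hz
    apply hv.2
    funext j
    have := congrFun hz j
    simpa using this

open Matrix in
lemma aux_spectrum_transpose {n : Type*} [Fintype n] [DecidableEq n] {K : Type*} [Field K]
    (Y : Matrix n n K) : spectrum K Yᵀ = spectrum K Y := by
  ext μ
  simp only [spectrum.mem_iff, not_iff_not]
  have key : algebraMap K (Matrix n n K) μ - Yᵀ = (algebraMap K (Matrix n n K) μ - Y)ᵀ := by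
    rw [Matrix.transpose_sub, Algebra.algebraMap_eq_smul_one, Matrix.transpose_smul,
      Matrix.transpose_one]
  rw [key, Matrix.isUnit_iff_isUnit_det, Matrix.det_transpose,
    ← Matrix.isUnit_iff_isUnit_det]

lemma aux_mem_spectrum_iff_eig {n : Type*} [Fintype n] [DecidableEq n]
    (Y : Matrix n n ℂ) (μ : ℂ) :
    μ ∈ spectrum ℂ Y ↔ Module.End.HasEigenvalue (Matrix.toLin' Y) μ := by
  rw [Module.End.hasEigenvalue_iff_mem_spectrum,
    ← AlgEquiv.spectrum_eq (Matrix.toLinAlgEquiv' : Matrix n n ℂ ≃ₐ[ℂ] _) Y]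
  rfl

open Matrix in
lemma aux_spectralRadius_of_domEig {n : Type*} [Fintype n] [DecidableEq n]
    (X : Matrix n n ℝ) (γ : ℝ) (h : IsDomEig X γ) :
    0 ≤ γ ∧ spectralRadius ℂ ((X.map Complex.ofReal)ᵀ) = ENNReal.ofReal γ := by
  have hγc := aux_hasEigenvalue_map_ofReal X γ h.1
  have hγ0 : 0 ≤ γ := by
    have := h.2 (γ : ℂ) hγc
    rw [Complex.norm_real, Real.norm_eq_abs] at this
    exact (abs_nonneg γ).trans this
  refine ⟨hγ0, ?_⟩
  rw [spectralRadius]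
  rw [aux_spectrum_transpose]
  apply le_antisymm
  · refine iSup₂_le fun μ hμ => ?_
    have := h.2 μ ((aux_mem_spectrum_iff_eig _ μ).mp hμ)
    calc (‖μ‖₊ : ℝ≥0∞) = ENNReal.ofReal ‖μ‖ := (ofReal_norm μ).symm
      _ ≤ ENNReal.ofReal γ := ENNReal.ofReal_le_ofReal (by exact this)
  · have hmem : (γ : ℂ) ∈ spectrum ℂ (X.map Complex.ofReal) :=
      (aux_mem_spectrum_iff_eig _ _).mpr hγc
    have hn : ENNReal.ofReal γ = (‖(γ : ℂ)‖₊ : ℝ≥0∞) := by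
      rw [show ((‖(γ : ℂ)‖₊ : ℝ≥0∞)) = ENNReal.ofReal ‖(γ : ℂ)‖ from (ofReal_norm _).symm, Complex.norm_real, Real.norm_eq_abs,
        abs_of_nonneg hγ0]
    rw [hn]
    exact le_iSup₂_of_le (γ : ℂ) hmem le_rfl

lemma aux_count_map {A B : Type*} [Fintype A] [DecidableEq A] [DecidableEq B]
    (ψ : A → B) (w : List A) (b : B) :
    (((w.map ψ).count b : ℕ) : ℝ) = ∑ a : A, if ψ a = b then ((w.count a : ℕ) : ℝ) else 0 := by
  induction w with
  | nil => simp
  | cons x w ih =>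
    simp only [List.map_cons, List.count_cons, beq_iff_eq]
    push_cast
    have key : ∀ a : A, (if ψ a = b then ((w.count a : ℝ) + if x = a then (1:ℝ) else 0) else 0)
        = (if ψ a = b then (w.count a : ℝ) else 0)
          + (if x = a then (if ψ a = b then (1:ℝ) else 0) else 0) := by
      intro a; split_ifs <;> simp
    rw [Finset.sum_congr rfl (fun a _ => key a), Finset.sum_add_distrib, ← ih,
      Finset.sum_ite_eq Finset.univ x (fun a => if ψ a = b then (1:ℝ) else 0),
      if_pos (Finset.mem_univ x)]

lemma aux_map_pow {n : Type*} [Fintype n] [DecidableEq n] (X : Matrix n n ℝ) (k : ℕ) :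
    (X.map Complex.ofReal) ^ k = (X ^ k).map Complex.ofReal := by
  have h : X.map Complex.ofReal = Complex.ofRealHom.mapMatrix X := rfl
  have h2 : (X ^ k).map Complex.ofReal = Complex.ofRealHom.mapMatrix (X ^ k) := rfl
  rw [h, h2, map_pow]

/-- restricting a sum over a fintype to a subtype, when the function vanishes outside -/
lemma aux_sum_subtype {A : Type*} [Fintype A] {p : A → Prop} [DecidablePred p]
    (f : A → ℝ) (hf : ∀ a : A, ¬ p a → f a = 0) :
    ∑ s : {x // p x}, f s.1 = ∑ a : A, f a := by
  classical
  rw [← Finset.sum_subtype (Finset.univ.filter p) (by simp) f]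
  exact Finset.sum_filter_of_ne (fun x _ hx => by by_contra h; exact hx (hf x h))

theorem stmt12 {A B : Type*} [Fintype A] [DecidableEq A] [Fintype B] [DecidableEq B]
    (σ : A → List A) (τ : B → List B) (a : A) (b : B)
    {l : ℕ} (q : ℕ) (P : A → Fin l) (st : Fin l → A)
    (hC : ConditionC σ q P st)
    (hσa : ∃ u : List A, u ≠ [] ∧ σ a = a :: u) (hτb : ∃ u : List B, u ≠ [] ∧ τ b = b :: u)
    -- σ projects onto the primitive substitution τ via the letter-to-letter morphism ψ
    (ψ : A → B) (hψa : ψ a = b) (hψ : ∀ c : A, List.map ψ (σ c) = τ (ψ c))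
    (hτprim : Primitive τ)
    -- σ' : the principal sub-substitution associated with a principal component i
    (i : Fin l) (hi : q ≤ (i : ℕ))
    (α β : ℝ) (hα : IsDomEig (IncMat τ) α) (hβ : IsDomEig (SubIncMat σ P i) β) :
    β = α := by
  classical
  obtain ⟨hql, hPsurj, hne, hmono, _, hful, hsep, _, hst, _, _⟩ := hC
  -- the principal component is closed under σ
  have hclos : ∀ c : A, P c = i → ∀ d ∈ σ c, P d = i := by
    intro c hc d hd
    by_contra hne'
    refine hsep c d ?_ ?_ ?_ hd
    · rw [hc]; exact hi
    · exact le_trans hi (by rw [← hc]; exact (Fin.le_def.mp (hmono c d hd)))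
    · rw [hc]; exact fun h => hne' h.symm
  -- letters of iterates of σ starting in the component stay in the component
  have hiter : ∀ n : ℕ, ∀ w : List A, (∀ x ∈ w, P x = i) →
      ∀ x ∈ (Subst.apply σ)^[n] w, P x = i := by
    intro n
    induction n with
    | zero => intro w hw; simpa using hw
    | succ n ih =>
      intro w hw x hx
      rw [Function.iterate_succ_apply] at hx
      refine ih _ ?_ x hx
      intro y hy
      rw [Subst.apply, List.mem_flatten] at hy
      obtain ⟨u, hu, hyu⟩ := hy
      obtain ⟨c, hc, rfl⟩ := List.mem_map.mp hu
      exact hclos c (hw c hc) y hyu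
  -- ψ intertwines σ and τ on words
  have hcomm1 : ∀ u : List A, List.map ψ (Subst.apply σ u) = Subst.apply τ (List.map ψ u) := by
    intro u
    rw [Subst.apply, Subst.apply, List.map_flatten, List.map_map, List.map_map]
    congr 2
    funext c
    exact hψ c
  -- ψ intertwines iterates of σ and τ
  have hcommiter : ∀ n : ℕ, ∀ w : List A,
      List.map ψ ((Subst.apply σ)^[n] w) = (Subst.apply τ)^[n] (List.map ψ w) := by
    intro n
    induction n with
    | zero => intro w; simp
    | succ n ih =>
      intro w
      rw [Function.iterate_succ_apply, Function.iterate_succ_apply, ih, hcomm1]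
  -- ψ restricted to the component is surjective onto B
  have hsurj : ∀ b' : B, ∃ s : {x // P x = i}, ψ s.1 = b' := by
    obtain ⟨n, hn, hall⟩ := hτprim
    intro b'
    have hb' : b' ∈ (Subst.apply τ)^[n] [ψ (st i)] := hall (ψ (st i)) b'
    rw [← show List.map ψ [st i] = [ψ (st i)] by simp, ← hcommiter n [st i]] at hb'
    obtain ⟨x, hx, hxb⟩ := List.mem_map.mp hb'
    exact ⟨⟨x, hiter n [st i] (by simpa using hst i) x hx⟩, hxb⟩
  -- notation for the matrices
  set S := {x // P x = i} with hS
  set M : Matrix S S ℝ := SubIncMat σ P i with hMdef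
  set N : Matrix B B ℝ := IncMat τ with hNdef
  have hM : ∀ r c : S, M r c = (((σ c.1).count r.1 : ℕ) : ℝ) := by
    intro r c
    rw [hMdef, SubIncMat]
    simp only [Matrix.of_apply]
    congr 2
    refine List.filter_eq_self.mpr fun x hx => ?_
    simpa using hclos c.1 c.2 x hx
  -- the projection matrix
  set Ψ : Matrix B S ℝ := Matrix.of fun b' s => if ψ s.1 = b' then 1 else 0 with hΨdef
  -- intertwining of incidence matrices
  have hcomm : N * Ψ = Ψ * M := by
    ext b' s
    rw [Matrix.mul_apply, Matrix.mul_apply]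
    have hL : ∑ b'' : B, N b' b'' * Ψ b'' s = N b' (ψ s.1) := by
      simp only [hΨdef, Matrix.of_apply, mul_ite, mul_one, mul_zero]
      rw [Finset.sum_ite_eq Finset.univ (ψ s.1) (fun b'' => N b' b''),
        if_pos (Finset.mem_univ _)]
    have hR : ∑ r : S, Ψ b' r * M r s
        = ∑ r : S, (if ψ r.1 = b' then (((σ s.1).count r.1 : ℕ) : ℝ) else 0) := by
      refine Finset.sum_congr rfl fun r _ => ?_
      simp only [hΨdef, Matrix.of_apply, ite_mul, one_mul, zero_mul, hM]
    rw [hL, hR]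
    have hvan : ∀ x : A, ¬ P x = i → (if ψ x = b' then (((σ s.1).count x : ℕ) : ℝ) else 0) = 0 := by
      intro x hx
      have hnm : x ∉ σ s.1 := fun h => hx (hclos s.1 s.2 x h)
      simp [List.count_eq_zero_of_not_mem hnm]
    rw [aux_sum_subtype (p := fun x => P x = i)
      (fun x => if ψ x = b' then (((σ s.1).count x : ℕ) : ℝ) else 0) hvan]
    rw [hNdef, IncMat]
    simp only [Matrix.of_apply]
    rw [← hψ s.1, aux_count_map ψ (σ s.1) b']
  -- intertwining of powers
  have hpow : ∀ n : ℕ, N ^ n * Ψ = Ψ * M ^ n := by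
    intro n
    induction n with
    | zero => simp
    | succ n ih =>
      rw [pow_succ, pow_succ, Matrix.mul_assoc (N ^ n) N Ψ, hcomm, ← Matrix.mul_assoc, ih,
        Matrix.mul_assoc]
  -- column sums coincide
  have hcolsum : ∀ n : ℕ, ∀ s : S, ∑ r : S, (M ^ n) r s = ∑ b' : B, (N ^ n) b' (ψ s.1) := by
    intro n s
    have h1 : ∑ b' : B, (N ^ n * Ψ) b' s = ∑ b' : B, (N ^ n) b' (ψ s.1) := by
      refine Finset.sum_congr rfl fun b' _ => ?_
      rw [Matrix.mul_apply]
      simp only [hΨdef, Matrix.of_apply, mul_ite, mul_one, mul_zero]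
      rw [Finset.sum_ite_eq Finset.univ (ψ s.1) (fun b'' => (N ^ n) b' b''),
        if_pos (Finset.mem_univ _)]
    have h2 : ∑ b' : B, (Ψ * M ^ n) b' s = ∑ r : S, (M ^ n) r s := by
      simp only [Matrix.mul_apply]
      rw [Finset.sum_comm]
      refine Finset.sum_congr rfl fun r _ => ?_
      simp only [hΨdef, Matrix.of_apply, ite_mul, one_mul, zero_mul]
      rw [Finset.sum_ite_eq Finset.univ (ψ r.1) (fun _ => (M ^ n) r s),
        if_pos (Finset.mem_univ _)]
    rw [← h1, ← h2, hpow n]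
  -- nonnegativity of entries of powers
  have hMn : ∀ n : ℕ, ∀ r c : S, 0 ≤ (M ^ n) r c := by
    have h0 : ∀ r c : S, 0 ≤ M r c := fun r c => by rw [hM]; positivity
    intro n
    induction n with
    | zero => intro r c; by_cases h : r = c <;> simp [Matrix.one_apply, h]
    | succ n ih =>
      intro r c
      rw [pow_succ, Matrix.mul_apply]
      exact Finset.sum_nonneg fun j _ => mul_nonneg (ih r j) (h0 j c)
  have hNn : ∀ n : ℕ, ∀ r c : B, 0 ≤ (N ^ n) r c := by
    have h0 : ∀ r c : B, 0 ≤ N r c := fun r c => by rw [hNdef, IncMat]; simp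
    intro n
    induction n with
    | zero => intro r c; by_cases h : r = c <;> simp [Matrix.one_apply, h]
    | succ n ih =>
      intro r c
      rw [pow_succ, Matrix.mul_apply]
      exact Finset.sum_nonneg fun j _ => mul_nonneg (ih r j) (h0 j c)
  -- the complexified transposed matrices
  set Mc : Matrix S S ℂ := (M.map Complex.ofReal)ᵀ with hMc
  set Nc : Matrix B B ℂ := (N.map Complex.ofReal)ᵀ with hNc
  have hmappow : ∀ {n' : Type} {X : Matrix n' n' ℝ}, True := trivial
  have hMcpow : ∀ n : ℕ, Mc ^ n = ((M ^ n).map Complex.ofReal)ᵀ := by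
    intro n
    rw [hMc, ← Matrix.transpose_pow, aux_map_pow]
  have hNcpow : ∀ n : ℕ, Nc ^ n = ((N ^ n).map Complex.ofReal)ᵀ := by
    intro n
    rw [hNc, ← Matrix.transpose_pow, aux_map_pow]
  -- norms of powers agree
  have hnorm : ∀ n : ℕ, ‖Mc ^ n‖₊ = ‖Nc ^ n‖₊ := by
    intro n
    rw [hMcpow n, hNcpow n, Matrix.linfty_opNNNorm_def, Matrix.linfty_opNNNorm_def]
    have hrow : ∀ s : S, (∑ r : S, ‖(((M ^ n).map Complex.ofReal)ᵀ) s r‖₊)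
        = ((fun b' : B => ∑ b'' : B, ‖(((N ^ n).map Complex.ofReal)ᵀ) b' b''‖₊) (ψ s.1)) := by
      intro s
      refine NNReal.coe_injective ?_
      rw [NNReal.coe_sum, NNReal.coe_sum]
      have l1 : ∀ r : S, (‖(((M ^ n).map Complex.ofReal)ᵀ) s r‖₊ : ℝ) = (M ^ n) r s := by
        intro r
        rw [coe_nnnorm, Matrix.transpose_apply, Matrix.map_apply, Complex.norm_real,
          Real.norm_eq_abs, abs_of_nonneg (hMn n r s)]
      have l2 : ∀ b'' : B, (‖(((N ^ n).map Complex.ofReal)ᵀ) (ψ s.1) b''‖₊ : ℝ)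
          = (N ^ n) b'' (ψ s.1) := by
        intro b''
        rw [coe_nnnorm, Matrix.transpose_apply, Matrix.map_apply, Complex.norm_real,
          Real.norm_eq_abs, abs_of_nonneg (hNn n b'' (ψ s.1))]
      rw [Finset.sum_congr rfl fun r _ => l1 r, Finset.sum_congr rfl fun b'' _ => l2 b'']
      exact hcolsum n s
    rw [Finset.sup_congr rfl fun s _ => hrow s]
    have himg : (Finset.univ.image (fun s : S => ψ s.1)) = (Finset.univ : Finset B) := by
      refine Finset.eq_univ_iff_forall.mpr fun b' => ?_
      obtain ⟨s, hs⟩ := hsurj b'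
      exact Finset.mem_image.mpr ⟨s, Finset.mem_univ s, hs⟩
    have hcomp : (fun s : S => (fun b' : B => ∑ b'' : B, ‖(((N ^ n).map Complex.ofReal)ᵀ) b' b''‖₊) (ψ s.1))
        = ((fun b' : B => ∑ b'' : B, ‖(((N ^ n).map Complex.ofReal)ᵀ) b' b''‖₊) ∘ (fun s : S => ψ s.1)) := rfl
    rw [hcomp, ← Finset.sup_image, himg]
  -- Gelfand's formula: equal spectral radii
  have hg1 := spectrum.pow_nnnorm_pow_one_div_tendsto_nhds_spectralRadius Mc
  have hg2 := spectrum.pow_nnnorm_pow_one_div_tendsto_nhds_spectralRadius Nc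
  have hseq : (fun n : ℕ => ((‖Mc ^ n‖₊ : ℝ≥0∞)) ^ (1 / (n : ℝ)))
      = fun n : ℕ => ((‖Nc ^ n‖₊ : ℝ≥0∞)) ^ (1 / (n : ℝ)) := by
    funext n; rw [hnorm n]
  rw [hseq] at hg1
  have hρ : spectralRadius ℂ Mc = spectralRadius ℂ Nc := tendsto_nhds_unique hg1 hg2
  obtain ⟨hβ0, hβρ⟩ := aux_spectralRadius_of_domEig M β hβ
  obtain ⟨hα0, hαρ⟩ := aux_spectralRadius_of_domEig N α hα
  rw [← hMc] at hβρ
  rw [← hNc] at hαρ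
  rw [hβρ, hαρ] at hρ
  exact (ENNReal.ofReal_eq_ofReal_iff hβ0 hα0).mp hρ
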